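/- arXiv:math/0010080 — 2 statements merged into one kernel-verified Lean document; each statement's English description precedes it below -/
import Mathlib

section
/- Let e_1, ..., e_{n-1} be nonnegative integers with e_0 := 0 such that e_i - e_{i-1} ≤ 1 for 2 ≤ i ≤ n-1 and Σ e_i ≥ 1. Then Σ_{i=1}^{n-1} e_i(1 + e_i - e_{i-1}) ≥ 2, with equality if and only if Σ_{i=1}^{n-1} e_i = 1. -/
lemma tel_aux (f : ℕ → ℤ) (m : ℕ) :
    ∑ i ∈ Finset.Icc 1 m, (f i - f (i - 1)) = f m - f 0 := by
  induction m with
  | zero => simp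
  | succ m ih =>
    rw [Finset.sum_Icc_succ_top (by omega : 1 ≤ m + 1), ih]
    simp

/-- Lemma `es`, part 2: for nonnegative integers `e_1, …, e_{n-1}` with `e_0 = 0`,
`e_i - e_{i-1} ≤ 1` for `1 ≤ i ≤ n-1`, and `Σ e_i ≥ 1`, one has
`Σ e_i (1 + e_i - e_{i-1}) ≥ 2`, with equality iff `Σ e_i = 1`. -/
theorem stmt_2 (n : ℕ) (e : ℕ → ℤ) (he0 : e 0 = 0)
    (hnn : ∀ i ∈ Finset.Icc 1 (n - 1), 0 ≤ e i)
    (hstep : ∀ i ∈ Finset.Icc 1 (n - 1), e i - e (i - 1) ≤ 1)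
    (hsum : 1 ≤ ∑ i ∈ Finset.Icc 1 (n - 1), e i) :
    2 ≤ ∑ i ∈ Finset.Icc 1 (n - 1), e i * (1 + e i - e (i - 1)) ∧
      ((∑ i ∈ Finset.Icc 1 (n - 1), e i * (1 + e i - e (i - 1))) = 2 ↔
        (∑ i ∈ Finset.Icc 1 (n - 1), e i) = 1) := by
  set m := n - 1 with hm
  set S := ∑ i ∈ Finset.Icc 1 m, e i with hS
  set Q := ∑ i ∈ Finset.Icc 1 m, e i * (e i - e (i - 1)) with hQ
  -- T = S + Q
  have hT : ∑ i ∈ Finset.Icc 1 m, e i * (1 + e i - e (i - 1)) = S + Q := by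
    rw [hS, hQ, ← Finset.sum_add_distrib]
    exact Finset.sum_congr rfl (fun i _ => by ring)
  -- Q ≤ S termwise
  have hQS : Q ≤ S := by
    apply Finset.sum_le_sum
    intro i hi
    have h1 := hnn i hi
    have h2 := hstep i hi
    nlinarith
  -- there is k with e k ≥ 1
  have hex : ∃ k ∈ Finset.Icc 1 m, 1 ≤ e k := by
    by_contra h
    push_neg at h
    have : S ≤ 0 := Finset.sum_nonpos (fun i hi => by
      have := h i hi; have := hnn i hi; omega)
    omega
  obtain ⟨k, hkmem, hek⟩ := hex
  have hkm : 1 ≤ k ∧ k ≤ m := by simpa using hkmem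
  -- 2Q = e m ^ 2 + Σ (e i - e (i-1))^2
  have h2Q : 2 * Q = e m ^ 2 + ∑ i ∈ Finset.Icc 1 m, (e i - e (i - 1)) ^ 2 := by
    have hsplit : 2 * Q = ∑ i ∈ Finset.Icc 1 m,
        (((fun j => e j ^ 2) i - (fun j => e j ^ 2) (i - 1)) + (e i - e (i - 1)) ^ 2) := by
      rw [hQ, Finset.mul_sum]
      exact Finset.sum_congr rfl (fun i _ => by ring)
    rw [hsplit, Finset.sum_add_distrib, tel_aux (fun j => e j ^ 2) m, he0]
    ring
  -- Σ over Icc 1 k of diffs squared ≥ e k ≥ 1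
  have hsub : ∑ i ∈ Finset.Icc 1 k, (e i - e (i - 1)) ^ 2 ≤
      ∑ i ∈ Finset.Icc 1 m, (e i - e (i - 1)) ^ 2 := by
    apply Finset.sum_le_sum_of_subset_of_nonneg
    · exact Finset.Icc_subset_Icc_right hkm.2
    · intro i _ _; positivity
  have hlow : (1 : ℤ) ≤ ∑ i ∈ Finset.Icc 1 k, (e i - e (i - 1)) ^ 2 := by
    have h1 : ∑ i ∈ Finset.Icc 1 k, (e i - e (i - 1)) ≤
        ∑ i ∈ Finset.Icc 1 k, (e i - e (i - 1)) ^ 2 := by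
      apply Finset.sum_le_sum
      intro i _
      nlinarith [sq_nonneg (e i - e (i - 1) - 1)]
    rw [tel_aux e k, he0] at h1
    omega
  have hemsq : (0 : ℤ) ≤ e m ^ 2 := sq_nonneg _
  have hQ1 : 1 ≤ Q := by omega
  refine ⟨by omega, ?_, ?_⟩ <;> intro h <;> omega
end

section
/- Let M_l be the l × l tridiagonal matrix over Z[x_1, ..., x_l, q_1, ..., q_{l-1}] with diagonal entries x_1, ..., x_l, entries q_i in position (i, i+1), entries -1 in position (i+1, i), and 0 elsewhere. Then det(M_l + λ·I) = Σ_{k=0}^{l} e^q_k(l) · λ^{l-k}, where e^q_k(l) are the quantum elementary symmetric polynomials defined by e^q_k(l) = e^q_k(l-1) + x_l e^q_{k-1}(l-1) + q_{l-1} e^q_{k-2}(l-2), e^q_0 = 1, e^q_k(l) = 0 for k < 0 or k > l. -/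
open MvPolynomial

/-- The variable `x_i`. -/
noncomputable def xvar (i : ℕ) : MvPolynomial (ℕ ⊕ ℕ) ℤ := X (Sum.inl i)

/-- The variable `q_i`. -/
noncomputable def qvar (i : ℕ) : MvPolynomial (ℕ ⊕ ℕ) ℤ := X (Sum.inr i)

/-- The `l × l` tridiagonal matrix `M_l` with diagonal `x_1, …, x_l`, entries `q_i`
in position `(i, i+1)`, `-1` in position `(i+1, i)`, and `0` elsewhere (0-indexed here),
with polynomial entries in the extra variable `λ`. -/
noncomputable def triMat (l : ℕ) :
    Matrix (Fin l) (Fin l) (Polynomial (MvPolynomial (ℕ ⊕ ℕ) ℤ)) :=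
  Matrix.of fun a b =>
    if a = b then Polynomial.C (xvar ((a : ℕ) + 1))
    else if (b : ℕ) = (a : ℕ) + 1 then Polynomial.C (qvar ((a : ℕ) + 1))
    else if (a : ℕ) = (b : ℕ) + 1 then -1 else 0

/-- Generic "reversed" tridiagonal matrix with diagonal `d (n-1), …, d 0` (top-left to
bottom-right), `u (n-1-a)` in position `(a, a-1)` and `-1` in position `(a, a+1)`. -/
def triB {R : Type*} [CommRing R] (d u : ℕ → R) (n : ℕ) : Matrix (Fin n) (Fin n) R :=
  Matrix.of fun a b =>
    if (a : ℕ) = b then d (n - 1 - a)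
    else if (a : ℕ) = (b : ℕ) + 1 then u (n - 1 - (a : ℕ))
    else if (b : ℕ) = (a : ℕ) + 1 then -1 else 0

set_option linter.unreachableTactic false
set_option linter.unusedTactic false
set_option linter.unnecessarySeqFocus false

theorem triB_det_rec {R : Type*} [CommRing R] (d u : ℕ → R) (n : ℕ) :
    (triB d u (n+2)).det = d (n+1) * (triB d u (n+1)).det + u n * (triB d u n).det := by
  rw [Matrix.det_succ_row_zero, Fin.sum_univ_succ, Fin.sum_univ_succ]
  have hrest : ∀ j : Fin n, triB d u (n+2) 0 j.succ.succ = 0 := by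
    intro j; simp [triB]
  have h00 : triB d u (n+2) 0 0 = d (n+1) := by simp [triB]
  have h01 : triB d u (n+2) 0 (Fin.succ 0) = -1 := by simp [triB]
  have hm0 : (triB d u (n+2)).submatrix Fin.succ (Fin.succAbove 0) = triB d u (n+1) := by
    ext a b
    simp only [Matrix.submatrix_apply, Fin.succAbove_zero, triB, Matrix.of_apply, Fin.val_succ]
    split_ifs <;> first | rfl | omega | (congr 1; omega) | simp_all
  have hm1 : ((triB d u (n+2)).submatrix Fin.succ (Fin.succ 0).succAbove).det
      = u n * (triB d u n).det := by
    rw [Matrix.det_succ_column_zero, Fin.sum_univ_succ]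
    have hz : ∀ i : Fin n,
        (triB d u (n+2)).submatrix Fin.succ (Fin.succ 0).succAbove i.succ 0 = 0 := by
      intro i
      simp only [Matrix.submatrix_apply, Fin.succ_succAbove_zero, triB, Matrix.of_apply,
        Fin.val_succ, Fin.val_zero]
      split_ifs <;> first | rfl | omega | simp_all
    have he : (triB d u (n+2)).submatrix Fin.succ (Fin.succ 0).succAbove 0 0 = u n := by
      simp only [Matrix.submatrix_apply, Fin.succ_succAbove_zero, triB, Matrix.of_apply,
        Fin.val_succ, Fin.val_zero]
      norm_num
    have hmm : ((triB d u (n+2)).submatrix Fin.succ (Fin.succ 0).succAbove).submatrix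
        (Fin.succAbove 0) Fin.succ = triB d u n := by
      ext a b
      simp only [Matrix.submatrix_apply, Fin.succAbove_zero, Fin.succ_succAbove_succ, triB,
        Matrix.of_apply, Fin.val_succ]
      split_ifs <;> first | rfl | omega | (congr 1; omega) | simp_all
    rw [he, hmm]
    simp only [hz]
    simp
  rw [h00, h01, hm0, hm1]
  simp only [hrest]
  simp
  try ring

/-- The diagonal entries (with `λ`), reversed-tridiagonal form. -/
noncomputable def ddq : ℕ → Polynomial (MvPolynomial (ℕ ⊕ ℕ) ℤ) :=
  fun i => Polynomial.C (xvar (i + 1)) + Polynomial.X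

/-- The superdiagonal entries, reversed-tridiagonal form. -/
noncomputable def uuq : ℕ → Polynomial (MvPolynomial (ℕ ⊕ ℕ) ℤ) :=
  fun i => Polynomial.C (qvar (i + 1))

theorem triMat_det_eq (l : ℕ) :
    (triMat l + (Polynomial.X : Polynomial (MvPolynomial (ℕ ⊕ ℕ) ℤ)) •
        (1 : Matrix (Fin l) (Fin l) (Polynomial (MvPolynomial (ℕ ⊕ ℕ) ℤ)))).det
      = (triB ddq uuq l).det := by
  rw [← Matrix.det_submatrix_equiv_self Fin.revPerm
    (triMat l + (Polynomial.X : Polynomial (MvPolynomial (ℕ ⊕ ℕ) ℤ)) • 1)]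
  congr 1
  apply Matrix.ext
  intro a b
  simp only [Matrix.submatrix_apply, Matrix.add_apply, Matrix.smul_apply, Matrix.one_apply,
    triMat, triB, Matrix.of_apply, Fin.revPerm_apply, smul_eq_mul, mul_ite, mul_one, mul_zero,
    ddq, uuq, Fin.ext_iff, Fin.val_rev]
  have ha : (a : ℕ) < l := a.isLt
  have hb : (b : ℕ) < l := b.isLt
  split_ifs <;>
    first
      | omega
      | (congr 2 <;> omega)
      | (congr 1 <;> omega)
      | (rw [show l - (1 + (a : ℕ)) = l - 1 - (a : ℕ) from by omega]; ring)
      | (simp_all [xvar, qvar, MvPolynomial.X_injective.eq_iff, Sum.inl.injEq,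
          Sum.inr.injEq] <;> omega)

/-- `det(M_l + λ·I) = Σ_{k=0}^{l} e^q_k(l) λ^{l-k}`, where `e^q_k(l)` are the quantum
elementary symmetric polynomials, defined by the recursion
`e^q_k(l) = e^q_k(l-1) + x_l e^q_{k-1}(l-1) + q_{l-1} e^q_{k-2}(l-2)`,
`e^q_0 = 1`, `e^q_k(l) = 0` for `k > l`. -/
theorem stmt_11 (l : ℕ) (E : ℕ → ℕ → MvPolynomial (ℕ ⊕ ℕ) ℤ)
    (hE0 : ∀ m, E 0 m = 1)
    (hEhigh : ∀ k m, m < k → E k m = 0)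
    (hrec : ∀ k m, 1 ≤ k → 1 ≤ m →
      E k m = E k (m - 1) + xvar m * E (k - 1) (m - 1) +
        (if 2 ≤ k ∧ 2 ≤ m then qvar (m - 1) * E (k - 2) (m - 2) else 0)) :
    (triMat l + (Polynomial.X : Polynomial (MvPolynomial (ℕ ⊕ ℕ) ℤ)) • (1 : Matrix (Fin l) (Fin l) (Polynomial (MvPolynomial (ℕ ⊕ ℕ) ℤ)))).det =
      ∑ k ∈ Finset.range (l + 1), Polynomial.C (E k l) * Polynomial.X ^ (l - k) := by
  rw [triMat_det_eq]
  induction l using Nat.strong_induction_on with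
  | _ l ih =>
    match l, ih with
    | 0, _ =>
      simp [triB, hE0]
    | 1, _ =>
      have h11 : E 1 1 = xvar 1 := by
        have h := hrec 1 1 le_rfl le_rfl
        simpa [hE0, hEhigh 1 0 (by omega)] using h
      rw [Matrix.det_fin_one]
      simp [triB, ddq, Finset.sum_range_succ, hE0, h11]
      ring
    | (n+2), ih =>
      rw [triB_det_rec, ih (n+1) (by omega), ih n (by omega)]
      have hr : ∀ k : ℕ, E (k+1) (n+2) = E (k+1) (n+1) + xvar (n+2) * E k (n+1) +
          (if 1 ≤ k then qvar (n+1) * E (k-1) n else 0) := by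
        intro k
        have h := hrec (k+1) (n+2) (by omega) (by omega)
        rw [show n+2-1 = n+1 from by omega, show k+1-1 = k from by omega,
          show n+2-2 = n from by omega, show k+1-2 = k-1 from by omega] at h
        simp only [show (2 ≤ k + 1 ∧ 2 ≤ n + 2) ↔ (1 ≤ k) from by omega] at h
        exact h
      -- abbreviations
      have hX : Polynomial.X * ∑ k ∈ Finset.range (n+2),
            Polynomial.C (E k (n+1)) * Polynomial.X ^ (n+1-k)
          = ∑ k ∈ Finset.range (n+2),
            Polynomial.C (E k (n+1)) * Polynomial.X ^ (n+2-k) := by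
        rw [Finset.mul_sum]
        refine Finset.sum_congr rfl fun k hk => ?_
        rw [Finset.mem_range] at hk
        rw [show n+2-k = (n+1-k)+1 from by omega, pow_succ]
        ring
      have hCx : Polynomial.C (xvar (n+2)) * ∑ k ∈ Finset.range (n+2),
            Polynomial.C (E k (n+1)) * Polynomial.X ^ (n+1-k)
          = ∑ k ∈ Finset.range (n+2),
            Polynomial.C (xvar (n+2) * E k (n+1)) * Polynomial.X ^ (n+1-k) := by
        rw [Finset.mul_sum]
        refine Finset.sum_congr rfl fun k _ => ?_
        rw [map_mul]; ring
      have hCq : Polynomial.C (qvar (n+1)) * ∑ k ∈ Finset.range (n+1),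
            Polynomial.C (E k n) * Polynomial.X ^ (n-k)
          = ∑ k ∈ Finset.range (n+1),
            Polynomial.C (qvar (n+1) * E k n) * Polynomial.X ^ (n-k) := by
        rw [Finset.mul_sum]
        refine Finset.sum_congr rfl fun k _ => ?_
        rw [map_mul]; ring
      -- expand the RHS sum
      have hRHS : ∑ k ∈ Finset.range (n+3), Polynomial.C (E k (n+2)) * Polynomial.X ^ (n+2-k)
          = (∑ k ∈ Finset.range (n+2),
              (Polynomial.C (E (k+1) (n+1)) * Polynomial.X ^ (n+1-k)
                + Polynomial.C (xvar (n+2) * E k (n+1)) * Polynomial.X ^ (n+1-k)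
                + (if 1 ≤ k then Polynomial.C (qvar (n+1) * E (k-1) n) * Polynomial.X ^ (n+1-k)
                    else 0)))
            + Polynomial.C (E 0 (n+2)) * Polynomial.X ^ (n+2) := by
        rw [Finset.sum_range_succ' (fun k => Polynomial.C (E k (n+2)) * Polynomial.X ^ (n+2-k))
          (n+2)]
        congr 1
        refine Finset.sum_congr rfl fun k hk => ?_
        rw [Finset.mem_range] at hk
        rw [hr k, map_add, map_add, show n+2-(k+1) = n+1-k from by omega]
        by_cases h1 : 1 ≤ k <;> simp [h1] <;> ring
      rw [hRHS]
      rw [Finset.sum_add_distrib, Finset.sum_add_distrib]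
      -- the `if` sum
      have hifsum : (∑ k ∈ Finset.range (n+2),
            (if 1 ≤ k then Polynomial.C (qvar (n+1) * E (k-1) n) * Polynomial.X ^ (n+1-k)
              else 0))
          = ∑ k ∈ Finset.range (n+1),
              Polynomial.C (qvar (n+1) * E k n) * Polynomial.X ^ (n-k) := by
        rw [Finset.sum_range_succ' (fun k =>
          if 1 ≤ k then Polynomial.C (qvar (n+1) * E (k-1) n) * Polynomial.X ^ (n+1-k) else 0)
          (n+1)]
        rw [if_neg (by omega : ¬ (1:ℕ) ≤ 0), add_zero]
        refine Finset.sum_congr rfl fun k hk => ?_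
        rw [Finset.mem_range] at hk
        rw [if_pos (by omega : 1 ≤ k+1), show k+1-1 = k from by omega,
          show n+1-(k+1) = n-k from by omega]
      -- the first sum plus the top term
      have hfirst : (∑ k ∈ Finset.range (n+2),
            Polynomial.C (E (k+1) (n+1)) * Polynomial.X ^ (n+1-k))
            + Polynomial.C (E 0 (n+2)) * Polynomial.X ^ (n+2)
          = ∑ k ∈ Finset.range (n+2), Polynomial.C (E k (n+1)) * Polynomial.X ^ (n+2-k) := by
        rw [Finset.sum_range_succ (fun k => Polynomial.C (E (k+1) (n+1)) * Polynomial.X ^ (n+1-k))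
          (n+1)]
        rw [hEhigh (n+2) (n+1) (by omega)]
        rw [Finset.sum_range_succ' (fun k => Polynomial.C (E k (n+1)) * Polynomial.X ^ (n+2-k))
          (n+1)]
        rw [hE0, hE0]
        simp only [map_zero, zero_mul, add_zero, map_one, one_mul]
        congr 1
        refine Finset.sum_congr rfl fun k hk => ?_
        rw [Finset.mem_range] at hk
        rw [show n+2-(k+1) = n+1-k from by omega]
      rw [hifsum]
      rw [show (∑ k ∈ Finset.range (n+2), Polynomial.C (E (k+1) (n+1)) * Polynomial.X ^ (n+1-k))
            + (∑ k ∈ Finset.range (n+2), Polynomial.C (xvar (n+2) * E k (n+1)) * Polynomial.X ^ (n+1-k))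
            + (∑ k ∈ Finset.range (n+1), Polynomial.C (qvar (n+1) * E k n) * Polynomial.X ^ (n-k))
            + Polynomial.C (E 0 (n+2)) * Polynomial.X ^ (n+2)
          = ((∑ k ∈ Finset.range (n+2), Polynomial.C (E (k+1) (n+1)) * Polynomial.X ^ (n+1-k))
              + Polynomial.C (E 0 (n+2)) * Polynomial.X ^ (n+2))
            + (∑ k ∈ Finset.range (n+2), Polynomial.C (xvar (n+2) * E k (n+1)) * Polynomial.X ^ (n+1-k))
            + (∑ k ∈ Finset.range (n+1), Polynomial.C (qvar (n+1) * E k n) * Polynomial.X ^ (n-k))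
          from by ring]
      rw [hfirst, ← hX, ← hCx, ← hCq]
      simp only [ddq, uuq]
      rw [show n+1+1 = n+2 from rfl]
      ring
end
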